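/- The bilinear map L is isotropic: ⟨L(v,v),L(v,v)⟩ = (1/2)λ1η·⟨v,v⟩² for all v ∈ D2. More precisely, for all v1, v2, v3 ∈ D2 one has K(L(v1,v2),v3) + K(L(v1,v3),v2) + K(L(v2,v3),v1) = (1/2)λ1η·(⟨v1,v2⟩v3 + ⟨v1,v3⟩v2 + ⟨v2,v3⟩v1), and consequently for all v1, v2, v3, v4 ∈ D2: ⟨L(v1,v2),L(v3,v4)⟩ + ⟨L(v1,v3),L(v2,v4)⟩ + ⟨L(v1,v4),L(v2,v3)⟩ = (1/2)λ1η·(⟨v1,v2⟩⟨v3,v4⟩ + ⟨v1,v3⟩⟨v2,v4⟩ + ⟨v1,v4⟩⟨v2,v3⟩). -/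
import Mathlib


open scoped RealInnerProductSpace
open Module Submodule

noncomputable section

variable {V : Type*} [NormedAddCommGroup V] [InnerProductSpace ℝ V]

/-- The curvature-type operator built from `ε` and the difference tensor `K`:
`R(X,Y)Z = ε(⟨Y,Z⟩X − ⟨X,Z⟩Y) − K(X,K(Y,Z)) + K(Y,K(X,Z))`. -/
def Rc (ε : ℝ) (K : V →ₗ[ℝ] V →ₗ[ℝ] V) (X Y Z : V) : V :=
  ε • (⟪Y, Z⟫ • X - ⟪X, Z⟫ • Y) - K X (K Y Z) + K Y (K X Z)

/-- The bilinear map `L(v₁,v₂) = K(v₁,v₂) − (λ₁/2)⟨v₁,v₂⟩ e₁`. -/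
def Lop (lam1 : ℝ) (e1 : V) (K : V →ₗ[ℝ] V →ₗ[ℝ] V) (v1 v2 : V) : V :=
  K v1 v2 - (lam1 / 2 * ⟪v1, v2⟫) • e1

/-- The distribution `D₂ = {v : v ⟂ e₁, K(e₁,v) = (λ₁/2)v}`. -/
def D2s (lam1 : ℝ) (e1 : V) (K : V →ₗ[ℝ] V →ₗ[ℝ] V) : Submodule ℝ V :=
  (ℝ ∙ e1)ᗮ ⊓ Module.End.eigenspace (K e1) (lam1 / 2)

/-- The distribution `D₃ = {w : w ⟂ e₁, K(e₁,w) = μw}`. -/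
def D3s (mu : ℝ) (e1 : V) (K : V →ₗ[ℝ] V →ₗ[ℝ] V) : Submodule ℝ V :=
  (ℝ ∙ e1)ᗮ ⊓ Module.End.eigenspace (K e1) mu

/-- The operator `P_v(ṽ) = K(v, L(v,ṽ))`, as a linear endomorphism of `V`. -/
def Pop (lam1 : ℝ) (e1 : V) (K : V →ₗ[ℝ] V →ₗ[ℝ] V) (v : V) : V →ₗ[ℝ] V :=
  (K v) ∘ₗ (K v - (lam1 / 2) •
    ((LinearMap.toSpanSingleton ℝ V e1) ∘ₗ (innerSL ℝ v).toLinearMap))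

/-- The eigenspace `V_v(c)` of `P_v` within the orthogonal complement of `v` in `D₂`. -/
def Vvs (lam1 c : ℝ) (e1 : V) (K : V →ₗ[ℝ] V →ₗ[ℝ] V) (v : V) : Submodule ℝ V :=
  D2s lam1 e1 K ⊓ (ℝ ∙ v)ᗮ ⊓ Module.End.eigenspace (Pop lam1 e1 K v) c

/-- Lemma 4.3: the bilinear map `L` is isotropic, together with its polarized forms. -/
theorem stmt_5 {V : Type*} [NormedAddCommGroup V] [InnerProductSpace ℝ V]
    (n m : ℕ) (hn : finrank ℝ V = n) (hn2 : 2 ≤ n)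
    (ε : ℝ) (hε : ε = 1 ∨ ε = -1)
    (K : V →ₗ[ℝ] V →ₗ[ℝ] V)
    (hKsymm : ∀ X Y : V, K X Y = K Y X)
    (hKcub : ∀ X Y Z : V, ⟪K X Y, Z⟫ = ⟪K X Z, Y⟫)
    (hpar : ∀ X Y Z U : V,
      Rc ε K X Y (K Z U) = K (Rc ε K X Y Z) U + K Z (Rc ε K X Y U))
    (e1 : V) (he1 : ‖e1‖ = 1)
    (lam1 η μ τ : ℝ)
    (hlam1 : lam1 = ⟪K e1 e1, e1⟫) (hlam1pos : 0 < lam1)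
    (hmax : ∀ u : V, ‖u‖ = 1 → ⟪K u u, u⟫ ≤ lam1)
    (hdisc : 0 < lam1 ^ 2 - 4 * ε)
    (hη : η = Real.sqrt (lam1 ^ 2 - 4 * ε) / 2)
    (hμ : μ = (lam1 - Real.sqrt (lam1 ^ 2 - 4 * ε)) / 2)
    (hτ : τ = η * (η + lam1 / 2) / 4)
    (hm2 : 2 ≤ m) (hmn : m ≤ n - 1)
    (hdimD2 : finrank ℝ (D2s lam1 e1 K) = m - 1)
    (hsplit : (ℝ ∙ e1) ⊔ D2s lam1 e1 K ⊔ D3s μ e1 K = ⊤)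
    (hLD3 : ∀ v1 ∈ D2s lam1 e1 K, ∀ v2 ∈ D2s lam1 e1 K,
      Lop lam1 e1 K v1 v2 ∈ D3s μ e1 K)
    (hKD2 : ∀ v ∈ D2s lam1 e1 K, ∀ w ∈ D3s μ e1 K, K v w ∈ D2s lam1 e1 K)
    :
    (∀ v ∈ D2s lam1 e1 K,
        ⟪Lop lam1 e1 K v v, Lop lam1 e1 K v v⟫ = lam1 * η / 2 * ⟪v, v⟫ ^ 2) ∧
    (∀ v1 ∈ D2s lam1 e1 K, ∀ v2 ∈ D2s lam1 e1 K, ∀ v3 ∈ D2s lam1 e1 K,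
        K (Lop lam1 e1 K v1 v2) v3 + K (Lop lam1 e1 K v1 v3) v2 +
            K (Lop lam1 e1 K v2 v3) v1 =
          (lam1 * η / 2) • (⟪v1, v2⟫ • v3 + ⟪v1, v3⟫ • v2 + ⟪v2, v3⟫ • v1)) ∧
    (∀ v1 ∈ D2s lam1 e1 K, ∀ v2 ∈ D2s lam1 e1 K, ∀ v3 ∈ D2s lam1 e1 K,
      ∀ v4 ∈ D2s lam1 e1 K,
        ⟪Lop lam1 e1 K v1 v2, Lop lam1 e1 K v3 v4⟫ +
            ⟪Lop lam1 e1 K v1 v3, Lop lam1 e1 K v2 v4⟫ +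
            ⟪Lop lam1 e1 K v1 v4, Lop lam1 e1 K v2 v3⟫ =
          lam1 * η / 2 * (⟪v1, v2⟫ * ⟪v3, v4⟫ + ⟪v1, v3⟫ * ⟪v2, v4⟫ +
            ⟪v1, v4⟫ * ⟪v2, v3⟫)) := by
  subst hη hμ
  set s := Real.sqrt (lam1 ^ 2 - 4 * ε) with hsdef
  have hs2 : s ^ 2 = lam1 ^ 2 - 4 * ε := Real.sq_sqrt hdisc.le
  have hspos : 0 < s := Real.sqrt_pos.2 hdisc
  have hee : ⟪e1, e1⟫ = 1 := by
    rw [real_inner_self_eq_norm_sq, he1]; norm_num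
  -- unfolding memberships
  have hD2 : ∀ v, v ∈ D2s lam1 e1 K → ⟪e1, v⟫ = 0 ∧ K e1 v = (lam1 / 2) • v := by
    intro v hv
    obtain ⟨h1, h2⟩ := Submodule.mem_inf.mp hv
    exact ⟨Submodule.mem_orthogonal_singleton_iff_inner_right.mp h1,
      Module.End.mem_eigenspace_iff.mp h2⟩
  have hD3 : ∀ w, w ∈ D3s ((lam1 - s) / 2) e1 K →
      ⟪e1, w⟫ = 0 ∧ K e1 w = ((lam1 - s) / 2) • w := by
    intro w hw
    obtain ⟨h1, h2⟩ := Submodule.mem_inf.mp hw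
    exact ⟨Submodule.mem_orthogonal_singleton_iff_inner_right.mp h1,
      Module.End.mem_eigenspace_iff.mp h2⟩
  -- K e1 e1 = lam1 • e1
  have hK11 : K e1 e1 = lam1 • e1 := by
    have horto : ∀ u : V, ⟪K e1 e1 - lam1 • e1, u⟫ = 0 := by
      intro u
      have hu : u ∈ (ℝ ∙ e1) ⊔ D2s lam1 e1 K ⊔ D3s ((lam1 - s) / 2) e1 K := by
        rw [hsplit]; trivial
      obtain ⟨a, ha, w, hw, rfl⟩ := Submodule.mem_sup.mp hu
      obtain ⟨b, hb, v, hv, rfl⟩ := Submodule.mem_sup.mp ha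
      obtain ⟨r, rfl⟩ := Submodule.mem_span_singleton.mp hb
      obtain ⟨hv1, hv2⟩ := hD2 v hv
      obtain ⟨hw1, hw2⟩ := hD3 w hw
      have h1 : ⟪K e1 e1, e1⟫ = lam1 := hlam1.symm
      have h2 : ⟪K e1 e1, v⟫ = 0 := by
        rw [hKcub e1 e1 v, hv2, real_inner_smul_left, real_inner_comm, hv1, mul_zero]
      have h3 : ⟪K e1 e1, w⟫ = 0 := by
        rw [hKcub e1 e1 w, hw2, real_inner_smul_left, real_inner_comm, hw1, mul_zero]
      have h4 : ⟪v, e1⟫ = 0 := by rw [real_inner_comm]; exact hv1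
      have h5 : ⟪w, e1⟫ = 0 := by rw [real_inner_comm]; exact hw1
      simp only [inner_add_right, inner_sub_left, inner_smul_right, inner_smul_left,
        RCLike.star_def, conj_trivial, h1, h2, h3, hee, h4, h5, hv1, hw1]
      ring
    have h0 := horto (K e1 e1 - lam1 • e1)
    rw [inner_self_eq_zero, sub_eq_zero] at h0
    exact h0
  -- orthogonality of D2 and D3
  have horthD : ∀ v ∈ D2s lam1 e1 K, ∀ w ∈ D3s ((lam1 - s) / 2) e1 K, ⟪v, w⟫ = 0 := by
    intro v hv w hw
    obtain ⟨hv1, hv2⟩ := hD2 v hv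
    obtain ⟨hw1, hw2⟩ := hD3 w hw
    have h1 : lam1 / 2 * ⟪v, w⟫ = (lam1 - s) / 2 * ⟪v, w⟫ := by
      calc lam1 / 2 * ⟪v, w⟫ = ⟪K e1 v, w⟫ := by rw [hv2, real_inner_smul_left]
        _ = ⟪K e1 w, v⟫ := hKcub e1 v w
        _ = (lam1 - s) / 2 * ⟪v, w⟫ := by
            rw [hw2, real_inner_smul_left, real_inner_comm]
    have h2 : s * ⟪v, w⟫ = 0 := by linarith
    rcases mul_eq_zero.mp h2 with h | h
    · exact absurd h hspos.ne'
    · exact h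
  -- the key cyclic identity
  have key : ∀ v1 ∈ D2s lam1 e1 K, ∀ v2 ∈ D2s lam1 e1 K, ∀ v3 ∈ D2s lam1 e1 K,
      K (Lop lam1 e1 K v1 v2) v3 + K (Lop lam1 e1 K v1 v3) v2 +
          K (Lop lam1 e1 K v2 v3) v1 =
        (lam1 * (s / 2) / 2) • (⟪v1, v2⟫ • v3 + ⟪v1, v3⟫ • v2 + ⟪v2, v3⟫ • v1) := by
    intro v1 hv1 v2 hv2 v3 hv3
    obtain ⟨hp1, he1v1⟩ := hD2 v1 hv1
    obtain ⟨hp2, he1v2⟩ := hD2 v2 hv2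
    obtain ⟨hp3, he1v3⟩ := hD2 v3 hv3
    obtain ⟨hpL23, heL23⟩ := hD3 _ (hLD3 v2 hv2 v3 hv3)
    obtain ⟨hpL12, heL12⟩ := hD3 _ (hLD3 v1 hv1 v2 hv2)
    obtain ⟨hpL13, heL13⟩ := hD3 _ (hLD3 v1 hv1 v3 hv3)
    have h23 : K v2 v3 = Lop lam1 e1 K v2 v3 + (lam1 / 2 * ⟪v2, v3⟫) • e1 := by
      rw [Lop]; abel
    have h12 : K v1 v2 = Lop lam1 e1 K v1 v2 + (lam1 / 2 * ⟪v1, v2⟫) • e1 := by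
      rw [Lop]; abel
    have h13 : K v1 v3 = Lop lam1 e1 K v1 v3 + (lam1 / 2 * ⟪v1, v3⟫) • e1 := by
      rw [Lop]; abel
    have hKv1L23 := (hD2 _ (hKD2 v1 hv1 _ (hLD3 v2 hv2 v3 hv3))).2
    have horth1 : ⟪v1, Lop lam1 e1 K v2 v3⟫ = 0 := horthD v1 hv1 _ (hLD3 v2 hv2 v3 hv3)
    -- compute the three curvature expressions
    have hA : Rc ε K e1 v1 (K v2 v3) =
        (lam1 / 2 * (lam1 ^ 2 / 4 - ε) * ⟪v2, v3⟫) • v1 -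
          (s / 2) • K v1 (Lop lam1 e1 K v2 v3) := by
      rw [Rc]
      rw [show ⟪v1, K v2 v3⟫ = 0 by
        rw [h23, inner_add_right, inner_smul_right, horth1, real_inner_comm e1 v1, hp1]; ring]
      rw [show ⟪e1, K v2 v3⟫ = lam1 / 2 * ⟪v2, v3⟫ by
        rw [h23, inner_add_right, inner_smul_right, hpL23, hee]; ring]
      rw [h23]
      simp only [map_add, map_smul, LinearMap.add_apply, LinearMap.smul_apply,
        hKsymm v1 e1, heL23, hK11, he1v1, hKv1L23]
      match_scalars <;> ring
    have hB : Rc ε K e1 v1 v2 = (s / 2) • Lop lam1 e1 K v1 v2 -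
        ((lam1 ^ 2 / 4 - ε) * ⟪v1, v2⟫) • e1 := by
      rw [Rc, hp2, he1v2, map_smul, h12]
      simp only [map_add, map_smul, heL12, hK11]
      match_scalars <;> ring
    have hC : Rc ε K e1 v1 v3 = (s / 2) • Lop lam1 e1 K v1 v3 -
        ((lam1 ^ 2 / 4 - ε) * ⟪v1, v3⟫) • e1 := by
      rw [Rc, hp3, he1v3, map_smul, h13]
      simp only [map_add, map_smul, heL13, hK11]
      match_scalars <;> ring
    have h0 := hpar e1 v1 v2 v3
    rw [hA, hB, hC] at h0
    simp only [map_sub, map_smul, LinearMap.sub_apply, LinearMap.smul_apply,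
      he1v2, he1v3] at h0
    rw [hKsymm v2 e1, he1v2, hKsymm v2 (Lop lam1 e1 K v1 v3),
      hKsymm v1 (Lop lam1 e1 K v2 v3)] at h0
    have hmul0 : (s / 2) • (K (Lop lam1 e1 K v1 v2) v3 + K (Lop lam1 e1 K v1 v3) v2 +
        K (Lop lam1 e1 K v2 v3) v1) =
        ((lam1 / 2) * (lam1 ^ 2 / 4 - ε)) •
          (⟪v1, v2⟫ • v3 + ⟪v1, v3⟫ • v2 + ⟪v2, v3⟫ • v1) := by
      linear_combination (norm := module) -h0
    have hco : ((lam1 / 2) * (lam1 ^ 2 / 4 - ε)) = (s / 2) * (lam1 * (s / 2) / 2) := by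
      linear_combination (-lam1 / 8) * hs2
    rw [hco, mul_smul] at hmul0
    have hne : (s / 2 : ℝ) ≠ 0 := by positivity
    exact smul_right_injective V hne hmul0
  -- conversion to inner products of L
  have conv : ∀ a ∈ D2s lam1 e1 K, ∀ b ∈ D2s lam1 e1 K, ∀ c ∈ D2s lam1 e1 K,
      ∀ d ∈ D2s lam1 e1 K, ⟪K (Lop lam1 e1 K a b) c, d⟫ =
        ⟪Lop lam1 e1 K a b, Lop lam1 e1 K c d⟫ := by
    intro a ha b hb c hc d hd
    obtain ⟨hpL, _⟩ := hD3 _ (hLD3 a ha b hb)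
    have hcd : K c d = Lop lam1 e1 K c d + (lam1 / 2 * ⟪c, d⟫) • e1 := by
      rw [Lop]; abel
    rw [hKsymm (Lop lam1 e1 K a b) c, hKcub c (Lop lam1 e1 K a b) d,
      real_inner_comm (Lop lam1 e1 K a b) ((K c) d), hcd, inner_add_right,
      inner_smul_right, real_inner_comm e1 (Lop lam1 e1 K a b), hpL]
    ring
  have quad : ∀ v1 ∈ D2s lam1 e1 K, ∀ v2 ∈ D2s lam1 e1 K, ∀ v3 ∈ D2s lam1 e1 K,
      ∀ v4 ∈ D2s lam1 e1 K,
        ⟪Lop lam1 e1 K v1 v2, Lop lam1 e1 K v3 v4⟫ +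
            ⟪Lop lam1 e1 K v1 v3, Lop lam1 e1 K v2 v4⟫ +
            ⟪Lop lam1 e1 K v1 v4, Lop lam1 e1 K v2 v3⟫ =
          lam1 * (s / 2) / 2 * (⟪v1, v2⟫ * ⟪v3, v4⟫ + ⟪v1, v3⟫ * ⟪v2, v4⟫ +
            ⟪v1, v4⟫ * ⟪v2, v3⟫) := by
    intro v1 hv1 v2 hv2 v3 hv3 v4 hv4
    have h := congrArg (fun x => ⟪x, v4⟫) (key v1 hv1 v2 hv2 v3 hv3)
    simp only [inner_add_left, real_inner_smul_left] at h
    rw [conv v1 hv1 v2 hv2 v3 hv3 v4 hv4, conv v1 hv1 v3 hv3 v2 hv2 v4 hv4,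
      conv v2 hv2 v3 hv3 v1 hv1 v4 hv4] at h
    rw [real_inner_comm (Lop lam1 e1 K v1 v4) (Lop lam1 e1 K v2 v3)] at h
    linear_combination h
  refine ⟨?_, key, quad⟩
  · intro v hv
    have h := quad v hv v hv v hv v hv
    rw [pow_two]
    linarith

end
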